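/- Suppose p, q, z ∈ S_θ with p, q ≠ 0, 0 ≤ θ < π/4, and C is a positive constant with C² ≥ |p|/(|q| cos 2θ). If |z| ≤ C then |1/(q + 1/(p+z))| ≤ C. -/

import Mathlib

open Real

lemma quad_aux (C Q c2 m : ℝ) (hC : 0 < C) (hQ : 0 < Q) (hc2 : 0 < c2)
    (hm0 : 0 ≤ m) (hm : m ≤ C^2*Q*c2 + C) :
    m^2 ≤ C^2*(Q^2*m^2 + 2*Q*c2*m + 1) := by
  by_cases hcase : 1 ≤ C^2*Q^2
  · nlinarith [mul_nonneg (mul_nonneg (sq_nonneg C) (sq_nonneg Q)) (sq_nonneg m),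
      mul_nonneg (mul_nonneg (mul_nonneg (sq_nonneg C) hQ.le) hc2.le) hm0]
  · push_neg at hcase
    set P := C^2*Q*c2 + C with hP
    have hP0 : 0 < P := by positivity
    have hgP : 0 ≤ C^2*(Q^2*P^2 + 2*Q*c2*P + 1) - P^2 := by
      nlinarith [sq_nonneg (C*Q*P), sq_nonneg (C^2*Q*c2)]
    have hmP : 0 ≤ (1 - C^2*Q^2) * (m * (P - m) * P) := by
      have h1 : 0 ≤ m * (P - m) * P :=
        mul_nonneg (mul_nonneg hm0 (sub_nonneg.2 hm)) hP0.le
      nlinarith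
    nlinarith [mul_nonneg hm0 hgP, mul_nonneg (sub_nonneg.2 hm) (sq_nonneg C)]

lemma main_real (c s c2 ap Q az m wr wim qr qim C : ℝ)
    (hc : 0 < c) (hs : 0 ≤ s) (hcs : s^2 + c^2 = 1) (hc2eq : c2 = c^2 - s^2)
    (hc2pos : 0 < c2) (hap : 0 < ap) (hQ : 0 < Q) (haz : 0 ≤ az) (hC : 0 < C)
    (hqr : Q*c ≤ qr) (hqim : |qim| ≤ Q*s)
    (hm0 : 0 ≤ m) (hmM : m ≤ ap + az) (hwr : (ap+az)*c ≤ wr)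
    (hnorm : m^2 = wr^2 + wim^2)
    (hple : ap ≤ C^2*Q*c2) (hazC : az ≤ C) :
    m^2 ≤ C^2*(Q^2*m^2 + 2*(qr*wr - qim*wim) + 1) := by
  have hwr' : m*c ≤ wr := le_trans (mul_le_mul_of_nonneg_right hmM hc.le) hwr
  have hwr0 : 0 ≤ wr := le_trans (by positivity) hwr'
  have h4 : (m*c)^2 ≤ wr^2 := by nlinarith [mul_nonneg hm0 hc.le]
  have hwim : |wim| ≤ m*s := by
    have hsq : wim^2 ≤ (m*s)^2 := by nlinarith [sq_nonneg m]
    rw [abs_le]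
    exact abs_le_of_sq_le_sq' hsq (by positivity)
  have hre : Q*m*c2 ≤ qr*wr - qim*wim := by
    have h1 : Q*c*(m*c) ≤ qr*wr :=
      mul_le_mul hqr hwr' (by positivity) (le_trans (by positivity) hqr)
    have h2 : |qim*wim| ≤ Q*s*(m*s) := by
      rw [abs_mul]
      exact mul_le_mul hqim hwim (abs_nonneg _) (by positivity)
    have h5 : Q*m*c2 = Q*c*(m*c) - Q*s*(m*s) := by rw [hc2eq]; ring
    linarith [le_abs_self (qim*wim)]
  have hmle : m ≤ C^2*Q*c2 + C := by linarith
  have hquad := quad_aux C Q c2 m hC hQ hc2pos hm0 hmle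
  nlinarith [sq_nonneg C]

lemma sector_bounds {θ : ℝ} (hθ0 : 0 ≤ θ) (hθ : θ < π/2) {w : ℂ} (hw : w = 0 ∨ |w.arg| ≤ θ) :
    ‖w‖ * Real.cos θ ≤ w.re ∧ |w.im| ≤ ‖w‖ * Real.sin θ := by
  by_cases h0 : w = 0
  · simp [h0]
  rcases hw with h | harg
  · exact absurd h h0
  have habs : (0:ℝ) < ‖w‖ := by
    simpa [norm_pos_iff] using h0
  constructor
  · have hcos : Real.cos θ ≤ Real.cos w.arg := by
      rw [← Real.cos_abs w.arg]
      exact Real.cos_le_cos_of_nonneg_of_le_pi (abs_nonneg _) (by linarith [Real.pi_pos]) harg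
    have hre : w.re = ‖w‖ * Real.cos w.arg := by
      rw [Complex.cos_arg h0]; field_simp
    rw [hre]
    exact mul_le_mul_of_nonneg_left hcos habs.le
  · have habs_arg : |w.arg| ≤ π/2 := by linarith
    have hsin : |Real.sin w.arg| ≤ Real.sin θ := by
      rw [abs_le] at habs_arg ⊢
      constructor
      · have : Real.sin (-θ) ≤ Real.sin w.arg :=
          Real.sin_le_sin_of_le_of_le_pi_div_two (by linarith) habs_arg.2 (abs_le.1 harg).1
        simpa using this
      · exact Real.sin_le_sin_of_le_of_le_pi_div_two habs_arg.1 hθ.le (abs_le.1 harg).2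
    have him : w.im = ‖w‖ * Real.sin w.arg := by
      rw [Complex.sin_arg]; field_simp
    rw [him, abs_mul, abs_of_pos habs]
    exact mul_le_mul_of_nonneg_left hsin habs.le

theorem key_lemma_one (θ : ℝ) (hθ0 : 0 ≤ θ) (hθ : θ < π / 4)
    (p q z : ℂ)
    (hp : p = 0 ∨ |p.arg| ≤ θ) (hq : q = 0 ∨ |q.arg| ≤ θ) (hz : z = 0 ∨ |z.arg| ≤ θ)
    (hp0 : p ≠ 0) (hq0 : q ≠ 0)
    (C : ℝ) (hC : 0 < C)
    (hC2 : ‖p‖ / (‖q‖ * Real.cos (2 * θ)) ≤ C ^ 2)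
    (hzC : ‖z‖ ≤ C) :
    ‖1 / (q + 1 / (p + z))‖ ≤ C := by
  have hpi := Real.pi_pos
  have hθ2 : θ < π / 2 := by linarith
  have hc : 0 < Real.cos θ := Real.cos_pos_of_mem_Ioo ⟨by linarith, hθ2⟩
  have hs : 0 ≤ Real.sin θ := Real.sin_nonneg_of_nonneg_of_le_pi hθ0 (by linarith)
  have hc2pos : 0 < Real.cos (2*θ) := Real.cos_pos_of_mem_Ioo ⟨by linarith, by linarith⟩
  have hcs : Real.sin θ ^ 2 + Real.cos θ ^ 2 = 1 := Real.sin_sq_add_cos_sq θ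
  have hc2eq : Real.cos (2*θ) = Real.cos θ ^ 2 - Real.sin θ ^ 2 := by
    have h1 := Real.cos_two_mul θ
    nlinarith
  obtain ⟨hpre, hpim⟩ := sector_bounds hθ0 hθ2 hp
  obtain ⟨hqre, hqim⟩ := sector_bounds hθ0 hθ2 hq
  obtain ⟨hzre, hzim⟩ := sector_bounds hθ0 hθ2 hz
  have hap : 0 < ‖p‖ := by simpa [norm_pos_iff] using hp0
  have hQ : 0 < ‖q‖ := by simpa [norm_pos_iff] using hq0
  have haz : 0 ≤ ‖z‖ := norm_nonneg z
  have hm0 : 0 ≤ ‖p+z‖ := norm_nonneg _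
  have hmM : ‖p+z‖ ≤ ‖p‖ + ‖z‖ := norm_add_le p z
  have hwre : (‖p‖ + ‖z‖) * Real.cos θ ≤ (p+z).re := by
    rw [Complex.add_re, add_mul]
    exact add_le_add hpre hzre
  have hnorm : ‖p+z‖ ^ 2 = (p+z).re ^ 2 + (p+z).im ^ 2 := by
    rw [Complex.sq_norm, Complex.normSq_apply]; ring
  have hple : ‖p‖ ≤ C^2 * ‖q‖ * Real.cos (2*θ) := by
    rw [div_le_iff₀ (by positivity)] at hC2
    calc ‖p‖ ≤ C^2 * (‖q‖ * Real.cos (2*θ)) := hC2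
    _ = C^2 * ‖q‖ * Real.cos (2*θ) := by ring
  have hkey := main_real (Real.cos θ) (Real.sin θ) (Real.cos (2*θ)) (‖p‖)
    (‖q‖) (‖z‖) (‖p+z‖) ((p+z).re) ((p+z).im)
    q.re q.im C hc hs hcs hc2eq hc2pos hap hQ haz hC hqre hqim hm0 hmM hwre hnorm hple hzC
  -- |q(p+z)+1|^2
  have habs_qw1 : ‖q * (p+z) + 1‖ ^ 2
      = ‖q‖ ^ 2 * ‖p+z‖ ^ 2 + 2 * (q * (p+z)).re + 1 := by
    rw [Complex.sq_norm, Complex.normSq_add]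
    simp [Complex.normSq_mul, ← Complex.sq_norm]
    ring
  have hmulre : (q * (p+z)).re = q.re * (p+z).re - q.im * (p+z).im := Complex.mul_re q (p+z)
  have hkey2 : (‖p+z‖ / C)^2 ≤ ‖q * (p+z) + 1‖ ^ 2 := by
    rw [habs_qw1, hmulre, div_pow, div_le_iff₀ (by positivity)]
    nlinarith [hkey, sq_nonneg C]
  have hkey' : ‖p+z‖ / C ≤ ‖q * (p+z) + 1‖ := by
    have h := abs_le_of_sq_le_sq' hkey2 (norm_nonneg _)
    rw [← abs_of_nonneg (show (0:ℝ) ≤ ‖p+z‖ / C by positivity)]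
    exact abs_le.2 h
  have hwrepos : 0 < (p+z).re := lt_of_lt_of_le (by positivity) hwre
  have hw0 : p + z ≠ 0 := fun h => by simp [h] at hwrepos
  have hmpos : 0 < ‖p+z‖ := by simpa [norm_pos_iff] using hw0
  have hqw1pos : (0:ℝ) < ‖q * (p+z) + 1‖ :=
    lt_of_lt_of_le (by positivity) hkey'
  have hqw1ne : q * (p+z) + 1 ≠ 0 := by
    intro h; rw [h] at hqw1pos; simp at hqw1pos
  have heq : 1 / (q + 1 / (p+z)) = (p+z) / (q * (p+z) + 1) := by
    field_simp
  rw [heq, norm_div, div_le_iff₀ hqw1pos]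
  calc ‖p+z‖ = (‖p+z‖ / C) * C := by field_simp
  _ ≤ ‖q * (p+z) + 1‖ * C := mul_le_mul_of_nonneg_right hkey' hC.le
  _ = C * ‖q * (p+z) + 1‖ := by ring
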